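/- Let n ≥ 1 and let λ₁, …, λ_{2n} be positive real numbers that are linearly independent over ℚ. Define φ on the upper half plane H⁺ = {z ∈ ℂ : Im z > 0} by φ(z) = ( (1/2)(e^{iλ₁z} + e^{iλ₂z}), (1/2)(e^{iλ₃z} + e^{iλ₄z}), …, (1/2)(e^{iλ_{2n-1}z} + e^{iλ_{2n}z}) ) ∈ ℂⁿ. Then φ is holomorphic on H⁺, φ(H⁺) is contained in the polydisk Δⁿ = {v ∈ ℂⁿ : |v_k| < 1 for all k}, and φ(H⁺) is dense in Δⁿ. -/

import Mathlib

open Complex Finset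


noncomputable def theta {m : ℕ} (lam : Fin m → ℝ) (N : ℕ) (p : Fin m → ℕ) : ℝ :=
  ∑ i, ((p i : ℝ) - (N:ℝ)) * lam i

noncomputable def coefC {m : ℕ} (β : Fin m → ℝ) (N : ℕ) (p : Fin m → ℕ) : ℂ :=
  ∏ i, ((Nat.choose (2*N) (p i) : ℂ) / 4^N)
    * Complex.exp (((-(((p i : ℝ) - (N:ℝ)) * β i)) : ℝ) * I)

noncomputable def psi {m : ℕ} (lam β : Fin m → ℝ) (N : ℕ) (x : ℝ) : ℂ :=
  ∏ i, Complex.cos (((lam i * x - β i)/2 : ℝ) : ℂ) ^ (2*N)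

lemma norm_exp_sub_exp (a b : ℝ) :
    ‖Complex.exp ((a:ℂ) * I) - Complex.exp ((b:ℂ) * I)‖ ^ 2
      = 4 * (1 - Real.cos ((a - b)/2) ^ 2) := by
  have hz : ‖Complex.exp ((a:ℂ) * I) - Complex.exp ((b:ℂ) * I)‖ ^ 2
      = (Real.cos a - Real.cos b)^2 + (Real.sin a - Real.sin b)^2 := by
    rw [Complex.sq_norm, normSq_apply, sub_re, sub_im,
      exp_ofReal_mul_I_re, exp_ofReal_mul_I_im, exp_ofReal_mul_I_re, exp_ofReal_mul_I_im]
    ring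
  rw [hz]
  have h1 := Real.sin_sq_add_cos_sq a
  have h2 := Real.sin_sq_add_cos_sq b
  have h3 : Real.cos ((a-b)/2) ^ 2 = 1/2 + Real.cos (2 * ((a-b)/2)) / 2 := Real.cos_sq _
  rw [show 2 * ((a-b)/2) = a - b by ring, Real.cos_sub] at h3
  nlinarith [h3]

lemma cos_half_pow (u : ℝ) (N : ℕ) :
    Complex.cos ((u/2 : ℝ) : ℂ) ^ (2*N)
      = ∑ j ∈ Finset.range (2*N+1), ((Nat.choose (2*N) j : ℂ) / 4^N)
          * Complex.exp ((((j:ℝ) - (N:ℝ)) * u : ℝ) * I) := by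
  have hcos : Complex.cos ((u/2 : ℝ) : ℂ)
      = (Complex.exp (((u/2 : ℝ):ℂ) * I) + Complex.exp (-((u/2 : ℝ):ℂ) * I)) / 2 := rfl
  rw [hcos, div_pow, add_pow, Finset.sum_div]
  refine Finset.sum_congr rfl fun j hj => ?_
  have hj' : j ≤ 2*N := Nat.lt_succ_iff.mp (Finset.mem_range.mp hj)
  rw [← Complex.exp_nat_mul, ← Complex.exp_nat_mul, ← Complex.exp_add]
  have harg : (j:ℂ) * (((u/2 : ℝ):ℂ) * I) + ((2*N - j : ℕ):ℂ) * (-((u/2 : ℝ):ℂ) * I)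
      = ((((j:ℝ) - (N:ℝ)) * u : ℝ) : ℂ) * I := by
    push_cast [hj']
    ring
  rw [harg]
  have h2 : ((2:ℂ) ^ (2*N)) = 4^N := by rw [pow_mul]; norm_num
  rw [h2]
  ring

lemma psi_expand {m : ℕ} (lam β : Fin m → ℝ) (N : ℕ) (x : ℝ) :
    psi lam β N x = ∑ p ∈ Fintype.piFinset (fun _ : Fin m => Finset.range (2*N+1)),
      coefC β N p * Complex.exp (((theta lam N p * x : ℝ) : ℂ) * I) := by
  calc psi lam β N x
      = ∏ i, ∑ j ∈ Finset.range (2*N+1), ((Nat.choose (2*N) j : ℂ) / 4^N)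
          * Complex.exp ((((j:ℝ) - (N:ℝ)) * (lam i * x - β i) : ℝ) * I) :=
        Finset.prod_congr rfl fun i _ => cos_half_pow (lam i * x - β i) N
    _ = ∑ p ∈ Fintype.piFinset (fun _ : Fin m => Finset.range (2*N+1)),
          ∏ i, (((Nat.choose (2*N) (p i) : ℂ) / 4^N)
            * Complex.exp ((((p i:ℝ) - (N:ℝ)) * (lam i * x - β i) : ℝ) * I)) :=
        Finset.prod_univ_sum _ _
    _ = _ := by
        refine Finset.sum_congr rfl fun p _ => ?_
        have h2 : ∀ i : Fin m,
            (((Nat.choose (2*N) (p i) : ℂ) / 4^N)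
              * Complex.exp ((((p i:ℝ) - (N:ℝ)) * (lam i * x - β i) : ℝ) * I))
            = (((Nat.choose (2*N) (p i) : ℂ) / 4^N)
                * Complex.exp (((-(((p i : ℝ) - (N:ℝ)) * β i)) : ℝ) * I))
              * Complex.exp (((((p i:ℝ) - (N:ℝ)) * lam i * x) : ℝ) * I) := by
          intro i
          rw [mul_assoc, ← Complex.exp_add]
          congr 2
          push_cast
          ring
        rw [Finset.prod_congr rfl fun i _ => h2 i, Finset.prod_mul_distrib,
          ← Complex.exp_sum]
        congr 2
        rw [theta, Finset.sum_mul, Complex.ofReal_sum, Finset.sum_mul]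

lemma psi_norm_le {m : ℕ} (lam β : Fin m → ℝ) (N : ℕ) (x : ℝ) {ρ : ℝ} (hρ0 : 0 ≤ ρ)
    (h : ∃ i, Real.cos ((lam i * x - β i)/2) ^ 2 ≤ ρ) :
    ‖psi lam β N x‖ ≤ ρ^N := by
  obtain ⟨i₀, hi₀⟩ := h
  have hcast : psi lam β N x = ((∏ i, Real.cos ((lam i * x - β i)/2) ^ (2*N) : ℝ) : ℂ) := by
    rw [psi]; push_cast; rfl
  rw [hcast, Complex.norm_real, Real.norm_eq_abs]
  have hnn : (0:ℝ) ≤ ∏ i, Real.cos ((lam i * x - β i)/2) ^ (2*N) :=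
    Finset.prod_nonneg fun i _ => by rw [pow_mul]; positivity
  rw [_root_.abs_of_nonneg hnn]
  have hrw : ∀ i : Fin m, Real.cos ((lam i * x - β i)/2) ^ (2*N)
      = (Real.cos ((lam i * x - β i)/2) ^ 2) ^ N := fun i => by rw [← pow_mul]
  rw [Finset.prod_congr rfl fun i _ => hrw i]
  calc ∏ i, (Real.cos ((lam i * x - β i)/2) ^ 2) ^ N
      = (Real.cos ((lam i₀ * x - β i₀)/2) ^ 2) ^ N
        * ∏ i ∈ Finset.univ.erase i₀, (Real.cos ((lam i * x - β i)/2) ^ 2) ^ N :=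
        (Finset.mul_prod_erase _ _ (Finset.mem_univ i₀)).symm
    _ ≤ ρ^N * 1 := by
        apply mul_le_mul
        · exact pow_le_pow_left₀ (sq_nonneg _) hi₀ N
        · apply Finset.prod_le_one (fun i _ => by positivity)
            (fun i _ => pow_le_one₀ (sq_nonneg _) (Real.cos_sq_le_one _))
        · exact Finset.prod_nonneg fun i _ => by positivity
        · positivity
    _ = ρ^N := mul_one _

lemma psi_integral {m : ℕ} (lam β : Fin m → ℝ) (N : ℕ) (T : ℝ)
    (hθ : ∀ p ∈ (Fintype.piFinset fun _ : Fin m => Finset.range (2*N+1)).erase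
        (fun _ => N), theta lam N p ≠ 0) :
    ∫ x in (0:ℝ)..T, psi lam β N x
      = coefC β N (fun _ => N) * (T:ℂ)
        + ∑ p ∈ (Fintype.piFinset fun _ : Fin m => Finset.range (2*N+1)).erase (fun _ => N),
            coefC β N p * ((Complex.exp (((theta lam N p : ℝ):ℂ) * I * (T:ℂ)) - 1)
              / (((theta lam N p : ℝ):ℂ) * I)) := by
  have hp₀ : (fun _ : Fin m => N) ∈ Fintype.piFinset fun _ : Fin m => Finset.range (2*N+1) := by
    simp [Fintype.mem_piFinset]; omega
  have hcont : ∀ p : Fin m → ℕ,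
      Continuous fun x : ℝ => coefC β N p * Complex.exp (((theta lam N p * x : ℝ):ℂ) * I) := by
    intro p
    apply Continuous.mul continuous_const
    apply Complex.continuous_exp.comp
    apply Continuous.mul _ continuous_const
    exact Complex.continuous_ofReal.comp (continuous_const.mul continuous_id)
  simp only [psi_expand lam β N]
  rw [intervalIntegral.integral_finset_sum (fun p _ => ((hcont p).intervalIntegrable 0 T))]
  simp only [intervalIntegral.integral_const_mul]
  rw [← Finset.add_sum_erase _ _ hp₀]
  congr 1
  · -- constant term
    have hz : theta lam N (fun _ : Fin m => N) = 0 := by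
      simp [theta]
    rw [hz]
    norm_num
  · refine Finset.sum_congr rfl fun p hp => ?_
    congr 1
    have hfun : (fun x : ℝ => Complex.exp (((theta lam N p * x : ℝ):ℂ) * I))
        = fun x : ℝ => Complex.exp ((((theta lam N p : ℝ):ℂ) * I) * (x:ℂ)) := by
      funext x; congr 1; push_cast; ring
    rw [hfun, integral_exp_mul_complex (mul_ne_zero (ofReal_ne_zero.mpr (hθ p hp)) I_ne_zero)]
    congr 1
    norm_num

lemma kronecker {m : ℕ} (lam : Fin m → ℝ)
    (hint : ∀ k : Fin m → ℤ, ∑ i, (k i : ℝ) * lam i = 0 → ∀ i, k i = 0)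
    (w : Fin m → ℂ) (hw : ∀ i, ‖w i‖ = 1)
    {ε : ℝ} (hε : 0 < ε) (hε1 : ε ≤ 1) :
    ∃ x : ℝ, ∀ i, ‖Complex.exp (((lam i * x : ℝ) : ℂ) * I) - w i‖ < ε := by
  by_contra hcon
  push_neg at hcon
  set β : Fin m → ℝ := fun i => (w i).arg with hβ
  have hwi : ∀ i, w i = Complex.exp (((β i : ℝ) : ℂ) * I) := by
    intro i
    have h := Complex.norm_mul_exp_arg_mul_I (w i)
    rw [hw i] at h
    simpa using h.symm
  set ρ : ℝ := 1 - ε^2/4 with hρ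
  have hε2 : ε^2 ≤ 1 := by nlinarith
  have hρ0 : (0:ℝ) ≤ ρ := by rw [hρ]; linarith
  have hρ1 : ρ < 1 := by rw [hρ]; nlinarith
  have hpt : ∀ x : ℝ, ∃ i, Real.cos ((lam i * x - β i)/2) ^ 2 ≤ ρ := by
    intro x
    obtain ⟨i, hi⟩ := hcon x
    refine ⟨i, ?_⟩
    have h4 : ‖Complex.exp (((lam i * x : ℝ):ℂ) * I) - w i‖ ^ 2
        = 4 * (1 - Real.cos ((lam i * x - β i)/2) ^ 2) := by
      rw [hwi i]; exact norm_exp_sub_exp (lam i * x) (β i)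
    nlinarith [hi, hε, norm_nonneg (Complex.exp (((lam i * x : ℝ):ℂ) * I) - w i)]
  obtain ⟨N, hN1, hNbig⟩ : ∃ N : ℕ, 1 ≤ N ∧ ((2*N+1 : ℝ))^m * ρ^N < 1 := by
    have ht := tendsto_pow_const_mul_const_pow_of_lt_one m hρ0 hρ1
    have hc : (0:ℝ) < (3:ℝ)^m := by positivity
    have hev := ht.eventually (gt_mem_nhds (show (0:ℝ) < ((3:ℝ)^m)⁻¹ by positivity))
    obtain ⟨N, hNa, hNb⟩ := ((hev.and (Filter.eventually_ge_atTop 1)).exists)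
    refine ⟨N, hNb, ?_⟩
    have h31 : ((2*N+1:ℝ))^m ≤ (3:ℝ)^m * (N:ℝ)^m := by
      rw [← mul_pow]
      apply pow_le_pow_left₀ (by positivity)
      have h1N : (1:ℝ) ≤ (N:ℝ) := by exact_mod_cast hNb
      linarith
    calc ((2*N+1 : ℝ))^m * ρ^N ≤ (3:ℝ)^m * ((N:ℝ)^m * ρ^N) := by
          rw [← mul_assoc]; apply mul_le_mul_of_nonneg_right h31 (by positivity)
      _ < (3:ℝ)^m * ((3:ℝ)^m)⁻¹ := mul_lt_mul_of_pos_left hNa hc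
      _ = 1 := by field_simp
  -- setup
  set P : Finset (Fin m → ℕ) := Fintype.piFinset (fun _ : Fin m => Finset.range (2*N+1)) with hP
  set p₀ : Fin m → ℕ := fun _ => N with hp₀def
  have hθne : ∀ p ∈ P.erase p₀, theta lam N p ≠ 0 := by
    intro p hp hzero
    have hsum : ∑ i, (((p i : ℤ) - (N:ℤ) : ℤ) : ℝ) * lam i = 0 := by
      rw [← hzero, theta]
      exact Finset.sum_congr rfl fun i _ => by push_cast; ring
    have hk := hint (fun i => (p i : ℤ) - (N:ℤ)) hsum
    have hpp : p = p₀ := funext fun i => by have h5 : (p i : ℤ) - N = 0 := hk i; show p i = N; omega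
    exact (Finset.ne_of_mem_erase hp) hpp
  set a : ℝ := (((2*N).choose N : ℝ))/4^N with ha_def
  have ha0 : 0 < a := by
    rw [ha_def]
    have : (0:ℝ) < ((2*N).choose N : ℝ) := by exact_mod_cast Nat.choose_pos (by omega)
    positivity
  have ha : 1/(2*(N:ℝ)+1) ≤ a := by
    have h4 := Nat.four_pow_le_two_mul_add_one_mul_central_binom N
    have h4' : (4:ℝ)^N ≤ (2*(N:ℝ)+1) * ((2*N).choose N : ℝ) := by exact_mod_cast h4
    rw [ha_def, div_le_div_iff₀ (by positivity) (by positivity)]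
    linarith
  have hC₀ : coefC β N p₀ = ((a:ℝ) : ℂ)^m := by
    rw [coefC, ha_def]
    have : ∀ i : Fin m, ((Nat.choose (2*N) (p₀ i) : ℂ) / 4^N)
        * Complex.exp (((-(((p₀ i : ℝ) - (N:ℝ)) * β i)) : ℝ) * I)
        = ((((2*N).choose N : ℝ)/4^N : ℝ) : ℂ) := by
      intro i
      rw [hp₀def]
      simp only [sub_self, zero_mul, neg_zero, Complex.ofReal_zero, zero_mul, Complex.exp_zero,
        mul_one]
      push_cast
      ring
    rw [Finset.prod_congr rfl fun i _ => this i, Finset.prod_const, Finset.card_univ,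
      Fintype.card_fin]
  have hgap : ρ^N < a^m := by
    have h1 : ρ^N < (((2*(N:ℝ)+1))^m)⁻¹ := by
      rw [inv_eq_one_div, lt_div_iff₀ (by positivity), mul_comm]
      exact hNbig
    calc ρ^N < ((2*(N:ℝ)+1)^m)⁻¹ := h1
      _ = (1/(2*(N:ℝ)+1))^m := by rw [one_div, inv_pow]
      _ ≤ a^m := pow_le_pow_left₀ (by positivity) ha m
  set K : ℝ := ∑ p ∈ P.erase p₀, ‖coefC β N p‖ * (2/|theta lam N p|) with hK_def
  have hK0 : 0 ≤ K := Finset.sum_nonneg fun p _ => by positivity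
  set T : ℝ := (K+1)/(a^m - ρ^N) with hT_def
  have hT : 0 < T := div_pos (by linarith) (by linarith)
  have hIb : ‖∫ x in (0:ℝ)..T, psi lam β N x‖ ≤ ρ^N * T := by
    have hb := intervalIntegral.norm_integral_le_of_norm_le_const
      (C := ρ^N) (f := psi lam β N) (a := (0:ℝ)) (b := T)
      (fun x _ => psi_norm_le lam β N x hρ0 (hpt x))
    rw [sub_zero, _root_.abs_of_pos hT] at hb
    linarith
  have hSb : ‖∑ p ∈ P.erase p₀,
      coefC β N p * ((Complex.exp (((theta lam N p : ℝ):ℂ) * I * (T:ℂ)) - 1)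
        / (((theta lam N p : ℝ):ℂ) * I))‖ ≤ K := by
    refine (norm_sum_le _ _).trans ?_
    rw [hK_def]
    apply Finset.sum_le_sum
    intro p hp
    rw [norm_mul]
    apply mul_le_mul_of_nonneg_left ?_ (norm_nonneg _)
    rw [norm_div]
    have hθp := hθne p hp
    have h2 : ‖(((theta lam N p : ℝ):ℂ) * I)‖ = |theta lam N p| := by
      rw [norm_mul, Complex.norm_real, Complex.norm_I, mul_one, Real.norm_eq_abs]
    rw [h2]
    gcongr
    have harg : ((theta lam N p : ℝ):ℂ) * I * (T:ℂ) = (((theta lam N p * T : ℝ)):ℂ) * I := by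
      push_cast; ring
    calc ‖Complex.exp (((theta lam N p : ℝ):ℂ) * I * (T:ℂ)) - 1‖
        ≤ ‖Complex.exp (((theta lam N p : ℝ):ℂ) * I * (T:ℂ))‖ + ‖(1:ℂ)‖ := norm_sub_le _ _
      _ = 1 + 1 := by rw [harg, Complex.norm_exp_ofReal_mul_I, norm_one]
      _ = 2 := by norm_num
  -- combine
  have hEq : (∫ x in (0:ℝ)..T, psi lam β N x)
      = coefC β N p₀ * (T:ℂ) + ∑ p ∈ P.erase p₀,
          coefC β N p * ((Complex.exp (((theta lam N p : ℝ):ℂ) * I * (T:ℂ)) - 1)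
            / (((theta lam N p : ℝ):ℂ) * I)) :=
    psi_integral lam β N T hθne
  have hnorm₀ : ‖coefC β N p₀ * (T:ℂ)‖ = a^m * T := by
    rw [norm_mul, hC₀, norm_pow, Complex.norm_real, Real.norm_eq_abs, _root_.abs_of_pos ha0,
      Complex.norm_real, Real.norm_eq_abs, _root_.abs_of_pos hT]
  have hmain : a^m * T ≤ ρ^N * T + K := by
    have heq2 : coefC β N p₀ * (T:ℂ)
        = (∫ x in (0:ℝ)..T, psi lam β N x) - ∑ p ∈ P.erase p₀,
            coefC β N p * ((Complex.exp (((theta lam N p : ℝ):ℂ) * I * (T:ℂ)) - 1)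
              / (((theta lam N p : ℝ):ℂ) * I)) := by
      rw [hEq]; ring
    calc a^m * T = ‖coefC β N p₀ * (T:ℂ)‖ := hnorm₀.symm
      _ ≤ ‖∫ x in (0:ℝ)..T, psi lam β N x‖ + ‖∑ p ∈ P.erase p₀,
            coefC β N p * ((Complex.exp (((theta lam N p : ℝ):ℂ) * I * (T:ℂ)) - 1)
              / (((theta lam N p : ℝ):ℂ) * I))‖ := by rw [heq2]; exact norm_sub_le _ _
      _ ≤ ρ^N * T + K := add_le_add hIb hSb
  have hfin : (a^m - ρ^N) * T ≤ K := by nlinarith [hmain]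
  have hTval : (a^m - ρ^N) * T = K + 1 := by
    have hne : a^m - ρ^N ≠ 0 := ne_of_gt (by linarith)
    rw [hT_def, mul_comm, div_mul_cancel₀ _ hne]
  linarith

lemma exists_unit_pair (u : ℂ) (hu : ‖u‖ ≤ 1) :
    ∃ a b : ℝ, (Complex.exp ((a:ℂ) * I) + Complex.exp ((b:ℂ) * I))/2 = u := by
  refine ⟨u.arg + Real.arccos ‖u‖, u.arg - Real.arccos ‖u‖, ?_⟩
  have habs : ‖u‖ ≤ 1 := hu
  have h0 : (0:ℝ) ≤ ‖u‖ := norm_nonneg u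
  have hsum : Complex.exp (((u.arg + Real.arccos ‖u‖ : ℝ):ℂ) * I)
      + Complex.exp (((u.arg - Real.arccos ‖u‖ : ℝ):ℂ) * I)
      = Complex.exp ((u.arg : ℂ) * I) * (2 * Complex.cos ((Real.arccos ‖u‖ : ℝ):ℂ)) := by
    rw [Complex.cos]
    push_cast
    rw [add_mul, sub_mul, sub_eq_add_neg, Complex.exp_add, Complex.exp_add, ← neg_mul]
    ring
  rw [hsum, ← Complex.ofReal_cos, Real.cos_arccos (by linarith) habs]
  conv_rhs => rw [← Complex.norm_mul_exp_arg_mul_I u]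
  ring

/-- Let `λ₁,…,λ_{2n}` be positive reals, linearly independent over `ℚ`. Then
`φ(z) = (½(e^{iλ₁z}+e^{iλ₂z}),…,½(e^{iλ_{2n-1}z}+e^{iλ_{2n}z}))` is holomorphic on the
upper half plane `H⁺`, maps `H⁺` into the polydisk `Δⁿ`, and has dense image in `Δⁿ`. -/
theorem dense_map_halfplane_to_polydisk {n : ℕ} (hn : 1 ≤ n)
    (lam : Fin (2 * n) → ℝ) (hpos : ∀ i, 0 < lam i) (hli : LinearIndependent ℚ lam)
    (φ : ℂ → Fin n → ℂ)
    (hφ : ∀ (z : ℂ) (k : Fin n), φ z k =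
      (1 / 2) * (Complex.exp (Complex.I * ((lam ⟨2 * k.1, by have := k.2; omega⟩ : ℝ) : ℂ) * z) +
        Complex.exp (Complex.I * ((lam ⟨2 * k.1 + 1, by have := k.2; omega⟩ : ℝ) : ℂ) * z))) :
    DifferentiableOn ℂ φ {z : ℂ | 0 < z.im} ∧
    (∀ z : ℂ, 0 < z.im → ∀ k : Fin n, ‖φ z k‖ < 1) ∧
    {v : Fin n → ℂ | ∀ k, ‖v k‖ < 1} ⊆ closure (φ '' {z : ℂ | 0 < z.im}) := by
  have habs_exp : ∀ (l : ℝ) (z : ℂ), ‖Complex.exp (Complex.I * (l:ℂ) * z)‖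
      = Real.exp (-(l * z.im)) := by
    intro l z
    rw [Complex.norm_exp]
    congr 1
    simp [Complex.mul_re, Complex.mul_im]
  have hmap : ∀ z : ℂ, 0 < z.im → ∀ k : Fin n, ‖φ z k‖ < 1 := by
    intro z hz k
    rw [hφ z k]
    have h1 : ‖Complex.exp (Complex.I * ((lam ⟨2 * k.1, by have := k.2; omega⟩ : ℝ) : ℂ) * z)‖ < 1 := by
      rw [habs_exp, Real.exp_lt_one_iff]
      have := hpos ⟨2 * k.1, by have := k.2; omega⟩
      nlinarith
    have h2 : ‖Complex.exp (Complex.I * ((lam ⟨2 * k.1 + 1, by have := k.2; omega⟩ : ℝ) : ℂ) * z)‖ < 1 := by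
      rw [habs_exp, Real.exp_lt_one_iff]
      have := hpos ⟨2 * k.1 + 1, by have := k.2; omega⟩
      nlinarith
    calc ‖(1/2 : ℂ) * (Complex.exp (Complex.I * ((lam ⟨2 * k.1, by have := k.2; omega⟩ : ℝ) : ℂ) * z) +
          Complex.exp (Complex.I * ((lam ⟨2 * k.1 + 1, by have := k.2; omega⟩ : ℝ) : ℂ) * z))‖
        ≤ (1/2) * (‖Complex.exp (Complex.I * ((lam ⟨2 * k.1, by have := k.2; omega⟩ : ℝ) : ℂ) * z)‖
          + ‖Complex.exp (Complex.I * ((lam ⟨2 * k.1 + 1, by have := k.2; omega⟩ : ℝ) : ℂ) * z)‖) := by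
          rw [norm_mul]
          have : ‖(1/2 : ℂ)‖ = 1/2 := by norm_num
          rw [this]
          exact mul_le_mul_of_nonneg_left (norm_add_le _ _) (by norm_num)
      _ < 1 := by linarith
  refine ⟨?_, hmap, ?_⟩
  · -- differentiability
    apply Differentiable.differentiableOn
    rw [differentiable_pi]
    intro k
    have hfk : (fun z => φ z k) = fun z =>
        (1 / 2 : ℂ) * (Complex.exp (Complex.I * ((lam ⟨2 * k.1, by have := k.2; omega⟩ : ℝ) : ℂ) * z) +
          Complex.exp (Complex.I * ((lam ⟨2 * k.1 + 1, by have := k.2; omega⟩ : ℝ) : ℂ) * z)) :=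
      funext fun z => hφ z k
    rw [hfk]
    apply Differentiable.const_mul
    apply Differentiable.add
    · exact (differentiable_id.const_mul _).cexp
    · exact (differentiable_id.const_mul _).cexp
  · -- density
    intro v hv
    rw [Metric.mem_closure_iff]
    intro ε' hε'
    have hsol : ∀ k : Fin n, ∃ a b : ℝ,
        (Complex.exp ((a:ℂ) * I) + Complex.exp ((b:ℂ) * I))/2 = v k :=
      fun k => exists_unit_pair (v k) (le_of_lt (hv k))
    choose A B hAB using hsol
    set w : Fin (2*n) → ℂ := fun j =>
      if j.1 % 2 = 0 then Complex.exp ((A ⟨j.1/2, by have := j.2; omega⟩ :ℂ) * I)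
      else Complex.exp ((B ⟨j.1/2, by have := j.2; omega⟩ :ℂ) * I) with hw_def
    have hw : ∀ j, ‖w j‖ = 1 := by
      intro j
      simp only [hw_def]
      by_cases h : j.1 % 2 = 0
      · rw [if_pos h]; exact Complex.norm_exp_ofReal_mul_I _
      · rw [if_neg h]; exact Complex.norm_exp_ofReal_mul_I _
    have hint : ∀ k : Fin (2*n) → ℤ, ∑ i, (k i : ℝ) * lam i = 0 → ∀ i, k i = 0 := by
      intro k hsum i
      have hq : ∑ i, (fun i => (k i : ℚ)) i • lam i = 0 := by
        rw [← hsum]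
        refine Finset.sum_congr rfl fun i _ => ?_
        rw [Rat.smul_def]
        norm_cast
      have := Fintype.linearIndependent_iff.mp hli (fun i => (k i : ℚ)) hq i
      exact_mod_cast this
    -- choose y
    have hsumlam : (0:ℝ) ≤ ∑ j, lam j := Finset.sum_nonneg fun j _ => (hpos j).le
    set y : ℝ := (ε'/4) / (1 + ∑ j, lam j) with hy_def
    have hy0 : 0 < y := div_pos (by linarith) (by linarith)
    have hyb : ∀ j, lam j * y < ε'/4 := by
      intro j
      have hj : lam j < 1 + ∑ j, lam j := by
        have := Finset.single_le_sum (f := lam) (fun i _ => (hpos i).le) (Finset.mem_univ j)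
        linarith
      calc lam j * y < (1 + ∑ j, lam j) * y := mul_lt_mul_of_pos_right hj hy0
        _ = ε'/4 := by rw [hy_def]; field_simp
    have hdamp : ∀ j, 1 - Real.exp (-(lam j * y)) < ε'/4 := by
      intro j
      have h1 : 1 - (lam j * y) ≤ Real.exp (-(lam j * y)) := by
        have := Real.add_one_le_exp (-(lam j * y))
        linarith
      linarith [hyb j]
    have hdamp1 : ∀ j, Real.exp (-(lam j * y)) ≤ 1 := by
      intro j
      rw [← Real.exp_zero]
      apply Real.exp_le_exp.mpr
      have := (hpos j).le
      nlinarith [hy0.le]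
    -- apply kronecker
    set ε₂ : ℝ := min (ε'/2) 1 with hε₂_def
    have hε₂0 : 0 < ε₂ := lt_min (by linarith) one_pos
    have hε₂1 : ε₂ ≤ 1 := min_le_right _ _
    obtain ⟨x, hx⟩ := kronecker lam hint w hw hε₂0 hε₂1
    set z : ℂ := (x:ℂ) + (y:ℂ) * I with hz_def
    have hzim : z.im = y := by simp [hz_def]
    have hsplit : ∀ (l : ℝ), Complex.exp (Complex.I * (l:ℂ) * z)
        = (Real.exp (-(l*y)) : ℝ) * Complex.exp (((l*x : ℝ):ℂ) * I) := by
      intro l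
      rw [Complex.ofReal_exp, ← Complex.exp_add]
      congr 1
      rw [hz_def]
      push_cast
      linear_combination ((l:ℂ)*(y:ℂ)) * Complex.I_sq
    have hest : ∀ (j : Fin (2*n)), ‖w j - Complex.exp (Complex.I * (lam j :ℂ) * z)‖
        < ε'/2 + ε'/4 := by
      intro j
      rw [hsplit (lam j)]
      calc ‖w j - (Real.exp (-(lam j*y)) : ℝ) * Complex.exp (((lam j*x : ℝ):ℂ) * I)‖
          ≤ ‖w j - Complex.exp (((lam j*x : ℝ):ℂ) * I)‖
            + ‖Complex.exp (((lam j*x : ℝ):ℂ) * I)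
              - (Real.exp (-(lam j*y)) : ℝ) * Complex.exp (((lam j*x : ℝ):ℂ) * I)‖ :=
            norm_sub_le_norm_sub_add_norm_sub _ _ _
        _ < ε'/2 + ε'/4 := by
            apply add_lt_add_of_lt_of_le
            · rw [norm_sub_rev]
              calc ‖Complex.exp (((lam j*x : ℝ):ℂ) * I) - w j‖ < ε₂ := hx j
                _ ≤ ε'/2 := min_le_left _ _
            · have heq : Complex.exp (((lam j*x : ℝ):ℂ) * I)
                  - (Real.exp (-(lam j*y)) : ℝ) * Complex.exp (((lam j*x : ℝ):ℂ) * I)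
                  = ((1 - Real.exp (-(lam j*y)) : ℝ) : ℂ) * Complex.exp (((lam j*x : ℝ):ℂ) * I) := by
                push_cast; ring
              rw [heq, norm_mul, Complex.norm_real, Real.norm_eq_abs,
                Complex.norm_exp_ofReal_mul_I, mul_one,
                _root_.abs_of_nonneg (by linarith [hdamp1 j])]
              linarith [hdamp j]
    refine ⟨φ z, ⟨z, by simp only [Set.mem_setOf_eq, hzim]; exact hy0, rfl⟩, ?_⟩
    rw [dist_pi_lt_iff hε']
    intro k
    have hk2 : 2 * k.1 < 2 * n := by have := k.2; omega
    have hk2' : 2 * k.1 + 1 < 2 * n := by have := k.2; omega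
    set j1 : Fin (2*n) := ⟨2 * k.1, hk2⟩ with hj1_def
    set j2 : Fin (2*n) := ⟨2 * k.1 + 1, hk2'⟩ with hj2_def
    have hj1v : (j1 : ℕ) = 2 * k.1 := rfl
    have hj2v : (j2 : ℕ) = 2 * k.1 + 1 := rfl
    have hwj1 : w j1 = Complex.exp ((A k : ℂ) * I) := by
      simp only [hw_def]
      have h0 : j1.1 % 2 = 0 := by omega
      rw [if_pos h0]
      have hfin : (⟨j1.1/2, by have := j1.2; omega⟩ : Fin n) = k := by
        apply Fin.ext
        show j1.1 / 2 = k.1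
        omega
      rw [hfin]
    have hwj2 : w j2 = Complex.exp ((B k : ℂ) * I) := by
      simp only [hw_def]
      have h0 : ¬ (j2.1 % 2 = 0) := by omega
      rw [if_neg h0]
      have hfin : (⟨j2.1/2, by have := j2.2; omega⟩ : Fin n) = k := by
        apply Fin.ext
        show j2.1 / 2 = k.1
        omega
      rw [hfin]
    have hvk : v k = (w j1 + w j2)/2 := by
      rw [hwj1, hwj2, hAB k]
    have he1' : ‖w j1 - Complex.exp (Complex.I * ((lam ⟨2 * k.1, by have := k.2; omega⟩ : ℝ) : ℂ) * z)‖
        < ε'/2 + ε'/4 := hest j1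
    have he2' : ‖w j2 - Complex.exp (Complex.I * ((lam ⟨2 * k.1 + 1, by have := k.2; omega⟩ : ℝ) : ℂ) * z)‖
        < ε'/2 + ε'/4 := hest j2
    rw [dist_eq_norm, hφ z k, hvk]
    calc ‖(w j1 + w j2)/2 - (1 / 2 : ℂ) *
          (Complex.exp (Complex.I * ((lam ⟨2 * k.1, by have := k.2; omega⟩ : ℝ) : ℂ) * z) +
            Complex.exp (Complex.I * ((lam ⟨2 * k.1 + 1, by have := k.2; omega⟩ : ℝ) : ℂ) * z))‖
        = ‖((w j1 - Complex.exp (Complex.I * ((lam ⟨2 * k.1, by have := k.2; omega⟩ : ℝ) : ℂ) * z))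
          + (w j2 - Complex.exp (Complex.I * ((lam ⟨2 * k.1 + 1, by have := k.2; omega⟩ : ℝ) : ℂ) * z))) / 2‖ := by
          congr 1
          ring
      _ ≤ (‖w j1 - Complex.exp (Complex.I * ((lam ⟨2 * k.1, by have := k.2; omega⟩ : ℝ) : ℂ) * z)‖
          + ‖w j2 - Complex.exp (Complex.I * ((lam ⟨2 * k.1 + 1, by have := k.2; omega⟩ : ℝ) : ℂ) * z)‖) / 2 := by
          rw [norm_div]
          have h2 : ‖(2:ℂ)‖ = 2 := by norm_num
          rw [h2]
          gcongr
          exact norm_add_le _ _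
      _ < ε' := by linarith
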